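/- Let B and C be commuting real symmetric n×n matrices with all eigenvalues of B and all eigenvalues of C strictly negative. Then every eigenvalue of the 2n×2n block matrix [[0, I], [B, C]] has strictly negative real part. -/

import Mathlib

open Matrix
open scoped ComplexOrder

/-- A Hermitian complex matrix whose eigenvalues are all positive is positive definite. -/
lemma aux_posDef_of_eigenvalues_pos {m : Type*} [Fintype m] [DecidableEq m]
    {A : Matrix m m ℂ} (hA : A.IsHermitian) (h : ∀ i, 0 < hA.eigenvalues i) :
    A.PosDef := by
  refine PosDef.of_dotProduct_mulVec_pos hA fun x hx => ?_
  set U : Matrix m m ℂ := (hA.eigenvectorUnitary : Matrix m m ℂ) with hUdef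
  have hU2 : U * star U = 1 := (Matrix.mem_unitaryGroup_iff).mp hA.eigenvectorUnitary.2
  set D : Matrix m m ℂ := diagonal (RCLike.ofReal ∘ hA.eigenvalues) with hDdef
  set y : m → ℂ := star U *ᵥ x with hy
  have hy0 : y ≠ 0 := by
    intro h0
    apply hx
    have hxy : U *ᵥ y = x := by rw [hy, mulVec_mulVec, hU2, one_mulVec]
    rw [← hxy, h0, mulVec_zero]
  have hD : D.PosDef := by
    refine PosDef.diagonal fun i => ?_
    simpa using (RCLike.ofReal_pos (K := ℂ)).mpr (h i)
  have key : dotProduct (star x) (A *ᵥ x) = dotProduct (star y) (D *ᵥ y) := by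
    have hsy : star y = (star x) ᵥ* U := by
      rw [hy, star_mulVec, Matrix.star_eq_conjTranspose, conjTranspose_conjTranspose]
    conv_lhs => rw [hA.spectral_theorem, Unitary.conjStarAlgAut_apply]
    rw [← hDdef, ← hUdef, mul_assoc, ← mulVec_mulVec, dotProduct_mulVec, ← hsy,
      ← mulVec_mulVec]
  rw [key]
  exact hD.dotProduct_mulVec_pos hy0

/-- For a real symmetric matrix with strictly negative spectrum, the complex
quadratic form `x ↦ x^* A x` is a strictly negative real number for `x ≠ 0`. -/
lemma aux_neg_quadform {m : Type*} [Fintype m] [DecidableEq m]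
    {A : Matrix m m ℝ} (hA : A.IsSymm) (hneg : ∀ a ∈ spectrum ℝ A, a < 0)
    {x : m → ℂ} (hx : x ≠ 0) :
    (dotProduct (star x) ((A.map Complex.ofReal) *ᵥ x)).re < 0 ∧
    (dotProduct (star x) ((A.map Complex.ofReal) *ᵥ x)).im = 0 := by
  have hherm : ((-A).map Complex.ofReal).IsHermitian := by
    ext i j
    simp [Matrix.conjTranspose_apply, Matrix.map_apply, Complex.conj_ofReal, hA.apply i j]
  have heig : ∀ i, 0 < hherm.eigenvalues i := by
    intro i
    have h1 : hherm.eigenvalues i ∈ spectrum ℝ ((-A).map Complex.ofReal) :=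
      hherm.eigenvalues_mem_spectrum_real i
    have h3 : hherm.eigenvalues i ∈ spectrum ℝ (-A) :=
      AlgHom.spectrum_apply_subset ((RCLike.ofRealAm (K := ℂ)).mapMatrix) (-A) h1
    rw [← spectrum.neg_eq, Set.mem_neg] at h3
    have := hneg _ h3
    linarith
  have hPD := aux_posDef_of_eigenvalues_pos hherm heig
  have hpos : (0 : ℂ) < dotProduct (star x) (((-A).map Complex.ofReal) *ᵥ x) :=
    hPD.dotProduct_mulVec_pos hx
  have hmapneg : ((-A).map Complex.ofReal) = -(A.map Complex.ofReal) := by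
    ext i j; simp
  rw [hmapneg, neg_mulVec, dotProduct_neg] at hpos
  rw [Complex.lt_def] at hpos
  constructor
  · have := hpos.1; simp at this; linarith
  · have := hpos.2; simp at this; linarith

/-- Stability direction of Lemma 5: if `B` and `C` are commuting real
symmetric matrices with all eigenvalues strictly negative, then every
eigenvalue of `[[0, I], [B, C]]` has strictly negative real part. -/
theorem block_stable_of_negative_spectra (n : ℕ)
    (B C : Matrix (Fin n) (Fin n) ℝ) (hB : B.IsSymm) (hC : C.IsSymm)
    (hBC : B * C = C * B)
    (hBneg : ∀ b ∈ spectrum ℝ B, b < 0)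
    (hCneg : ∀ c ∈ spectrum ℝ C, c < 0) :
    ∀ s ∈ spectrum ℂ (((fromBlocks 0 1 B C : Matrix (Fin n ⊕ Fin n) (Fin n ⊕ Fin n) ℝ)).map (Complex.ofReal)), s.re < 0 := by
  intro s hs
  classical
  set M : Matrix (Fin n ⊕ Fin n) (Fin n ⊕ Fin n) ℂ :=
    (fromBlocks 0 1 B C).map Complex.ofReal with hM
  rw [← AlgEquiv.spectrum_eq (Matrix.toLinAlgEquiv' (R := ℂ)) M,
    ← Module.End.hasEigenvalue_iff_mem_spectrum] at hs
  obtain ⟨v, hv⟩ := hs.exists_hasEigenvector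
  have hv' : M *ᵥ v = s • v := by
    have := hv.apply_eq_smul
    simpa [Matrix.toLinAlgEquiv'_apply] using this
  set x : Fin n → ℂ := v ∘ Sum.inl with hxdef
  set y : Fin n → ℂ := v ∘ Sum.inr with hydef
  have hMblocks : M = fromBlocks 0 1 (B.map Complex.ofReal) (C.map Complex.ofReal) := by
    rw [hM, fromBlocks_map, Matrix.map_zero _ Complex.ofReal_zero,
      Matrix.map_one _ Complex.ofReal_zero Complex.ofReal_one]
  have hmv : M *ᵥ v = Sum.elim ((0 : Matrix (Fin n) (Fin n) ℂ) *ᵥ x + (1 : Matrix (Fin n) (Fin n) ℂ) *ᵥ y)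
      ((B.map Complex.ofReal) *ᵥ x + (C.map Complex.ofReal) *ᵥ y) := by
    rw [hMblocks, fromBlocks_mulVec]
  have eq1 : y = s • x := by
    funext i
    have := congrFun (hmv.symm.trans hv') (Sum.inl i)
    simpa [hxdef] using this
  have eq2 : (B.map Complex.ofReal) *ᵥ x + (C.map Complex.ofReal) *ᵥ y = s • y := by
    funext i
    have := congrFun (hmv.symm.trans hv') (Sum.inr i)
    simpa [hydef] using this
  have hx : x ≠ 0 := by
    intro h0
    apply hv.2
    have hy0 : y = 0 := by rw [eq1, h0, smul_zero]
    funext i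
    cases i with
    | inl i => exact congrFun h0 i
    | inr i => exact congrFun hy0 i
  rw [eq1] at eq2
  have hEq : dotProduct (star x) ((B.map Complex.ofReal) *ᵥ x)
      + s * dotProduct (star x) ((C.map Complex.ofReal) *ᵥ x)
      = s * s * dotProduct (star x) x := by
    have := congrArg (fun w => dotProduct (star x) w) eq2
    simpa [dotProduct_add, mulVec_smul, dotProduct_smul, smul_smul, smul_eq_mul,
      mul_assoc] using this
  have hNpos : (0 : ℂ) < dotProduct (star x) x := dotProduct_star_self_pos_iff.mpr hx
  rw [Complex.lt_def] at hNpos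
  have hNre : 0 < (dotProduct (star x) x).re := by simpa using hNpos.1
  have hNim : (dotProduct (star x) x).im = 0 := by
    have := hNpos.2; simp at this; linarith
  obtain ⟨hBre, hBim⟩ := aux_neg_quadform hB hBneg hx
  obtain ⟨hCre, hCim⟩ := aux_neg_quadform hC hCneg hx
  set qB := dotProduct (star x) ((B.map Complex.ofReal) *ᵥ x)
  set qC := dotProduct (star x) ((C.map Complex.ofReal) *ᵥ x)
  set N := dotProduct (star x) x
  have hre := congrArg Complex.re hEq
  have him := congrArg Complex.im hEq
  simp only [Complex.add_re, Complex.add_im, Complex.mul_re, Complex.mul_im,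
    hBim, hCim, hNim, mul_zero, zero_mul, add_zero, sub_zero, zero_add] at hre him
  rcases eq_or_ne s.im 0 with hb | hb
  · rw [hb] at hre
    by_contra hcontra
    push_neg at hcontra
    nlinarith [mul_nonneg hcontra hcontra, mul_nonneg (mul_nonneg hcontra hcontra) hNre.le,
      mul_nonpos_of_nonneg_of_nonpos hcontra hCre.le]
  · have him' : qC.re = (s.re + s.re) * N.re := by
      have hfac : s.im * qC.re = s.im * ((s.re + s.re) * N.re) := by ring_nf; ring_nf at him; linarith
      exact mul_left_cancel₀ hb hfac
    nlinarith [him', hCre, hNre]
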